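/- For c > 0, λ > 0, the Gamma Laplace transform L(u) = (1 + u/λ)^{−c} is the pointwise limit as α → 0⁺ of the tempered stable Laplace transforms L_α(u) = exp(cΓ(−α)[(λ+u)^α − λ^α]) with Γ(−α) = −Γ(1−α)/α, for each u ≥ 0. -/

import Mathlib

open Real Filter Set

theorem stmt14 (c lam : ℝ) (hc : 0 < c) (hlam : 0 < lam) (u : ℝ) (hu : 0 ≤ u) :
    Tendsto (fun α : ℝ => Real.exp (c * (-Real.Gamma (1 - α) / α) *
        ((lam + u) ^ α - lam ^ α)))
      (nhdsWithin 0 (Ioi 0))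
      (nhds ((1 + u / lam) ^ (-c))) := by
  have hlu : 0 < lam + u := by linarith
  have hx : 0 < 1 + u / lam := by positivity
  -- slope limit
  have hd : HasDerivAt (fun α : ℝ => (lam + u) ^ α - lam ^ α)
      (Real.log (lam + u) - Real.log lam) 0 := by
    have h1 := (Real.hasStrictDerivAt_const_rpow hlu 0).hasDerivAt
    have h2 := (Real.hasStrictDerivAt_const_rpow hlam 0).hasDerivAt
    simpa [Pi.sub_def] using h1.sub h2
  have hslope : Tendsto (fun α : ℝ => ((lam + u) ^ α - lam ^ α) / α)
      (nhdsWithin 0 (Ioi 0)) (nhds (Real.log (lam + u) - Real.log lam)) := by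
    have := hasDerivAt_iff_tendsto_slope.mp hd
    have h := this.mono_left (nhdsWithin_mono 0 (by
      intro x hx; exact fun h => absurd h (ne_of_gt hx)))
    refine h.congr (fun x => ?_)
    simp [slope_def_field, div_eq_inv_mul]
  -- Gamma limit
  have hG : Tendsto (fun α : ℝ => Real.Gamma (1 - α)) (nhdsWithin 0 (Ioi 0)) (nhds 1) := by
    have hcont : ContinuousAt Real.Gamma 1 :=
      (Real.differentiableAt_Gamma (fun m h => by
        have hm : (0:ℝ) ≤ (m:ℝ) := Nat.cast_nonneg m
        have h1 : (1:ℝ) = -(m:ℝ) := h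
        linarith)).continuousAt
    have h0 : Tendsto (fun α : ℝ => (1:ℝ) - α) (nhds 0) (nhds 1) := by
      simpa [Pi.sub_def] using (continuous_const.sub continuous_id).tendsto (0:ℝ)
    have : Tendsto (fun α : ℝ => Real.Gamma (1 - α)) (nhds 0) (nhds (Real.Gamma 1)) :=
      hcont.tendsto.comp h0
    simpa [Real.Gamma_one] using this.mono_left nhdsWithin_le_nhds
  -- combine
  have hexp : Tendsto (fun α : ℝ => c * (-Real.Gamma (1 - α) / α) * ((lam + u) ^ α - lam ^ α))
      (nhdsWithin 0 (Ioi 0))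
      (nhds (c * (-1) * (Real.log (lam + u) - Real.log lam))) := by
    have h := ((hG.neg.const_mul c).mul hslope)
    refine h.congr' ?_
    filter_upwards [self_mem_nhdsWithin] with α hα
    have : α ≠ 0 := ne_of_gt hα
    field_simp
  have hfinal := (Real.continuous_exp.tendsto _).comp hexp
  have heq : Real.exp (c * (-1) * (Real.log (lam + u) - Real.log lam)) = (1 + u / lam) ^ (-c) := by
    rw [Real.rpow_def_of_pos hx]
    congr 1
    have : Real.log (1 + u / lam) = Real.log (lam + u) - Real.log lam := by
      rw [← Real.log_div (ne_of_gt hlu) (ne_of_gt hlam)]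
      congr 1
      field_simp
    rw [this]; ring
  rw [← heq]
  exact hfinal
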